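/- arXiv:math/0404540 — 2 statements merged into one kernel-verified Lean document; each statement's English description precedes it below -/
import Mathlib

section
/- Define numbers n_{k;d} for 0 ≤ k ≤ r−1 and d ≥ −1 by the generating function ∑_{d≥−1} n_{k;d} z^d = e^{−kz}/(1 − e^{−rz}). Then n_{k;−1} = 1/r for all k, and the coefficients satisfy the inversion property: if H_k(z) = ∑_{i=0}^{r−1} e^{a(k,i)z} E^{(i)}(z) with a(k,i) = k−r for i < k and a(k,i) = k for i ≥ k, then E^{(k)}(z) = (1/(1 − e^{−rz}))·(e^{−kz} H_k(z) − e^{−(k+1)z} H_{k+1}(z)), where H_r := H₀, for any collection of commuting formal series E^{(0)}(z),…,E^{(r−1)}(z). -/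
open PowerSeries

/-- Define `n_{k;d}` (`d ≥ −1`) by
`∑_{d≥−1} n_{k;d} z^d = e^{−kz}/(1 − e^{−rz})`, i.e. by
`z·e^{−kz} = (1 − e^{−rz})·N_k(z)` with `N_k(z) = ∑_{d≥−1} n_{k;d} z^{d+1}`; then
`n_{k;−1} = 1/r`.  Moreover the system `H_k(z) = ∑_i e^{a(k,i)z} E^{(i)}(z)` with
`a(k,i) = k−r` for `i < k` and `a(k,i) = k` for `i ≥ k`, `H_r := H_0`, inverts to
`(1 − e^{−rz}) E^{(k)}(z) = e^{−kz} H_k(z) − e^{−(k+1)z} H_{k+1}(z)`, for any collection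
of (commuting) formal series `E^{(0)},…,E^{(r−1)}`. -/
theorem stmt_12 (r : ℕ) (hr : 0 < r) (A : Type*) [CommRing A] [Algebra ℚ A]
    (E H : ℕ → PowerSeries A)
    (a : ℕ → ℕ → ℤ) (ha : ∀ k i, a k i = if i < k then (k : ℤ) - r else (k : ℤ))
    (hH : ∀ k, k < r →
      H k = ∑ i ∈ Finset.range r, rescale ((a k i : ℤ) : A) (exp A) * E i)
    (hHr : H r = H 0) :
    (∀ (k : ℕ) (N : PowerSeries A), k < r →
      PowerSeries.X * rescale ((-(k : ℤ) : ℤ) : A) (exp A)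
          = (1 - rescale ((-(r : ℤ) : ℤ) : A) (exp A)) * N →
      PowerSeries.constantCoeff N = algebraMap ℚ A (1 / r)) ∧
    (∀ k, k < r →
      (1 - rescale ((-(r : ℤ) : ℤ) : A) (exp A)) * E k
        = rescale ((-(k : ℤ) : ℤ) : A) (exp A) * H k
          - rescale ((-((k : ℤ) + 1) : ℤ) : A) (exp A) * H (k + 1)) := by
  set G : PowerSeries A := rescale ((-(r : ℤ) : ℤ) : A) (exp A) with hG
  -- helper: e^{-mz} * H m expands nicely
  have helper : ∀ m, m < r →
      rescale ((-(m : ℤ) : ℤ) : A) (exp A) * H m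
        = ∑ i ∈ Finset.range r, (if i < m then G else 1) * E i := by
    intro m hm
    rw [hH m hm, Finset.mul_sum]
    refine Finset.sum_congr rfl fun i _ => ?_
    rw [← mul_assoc, exp_mul_exp_eq_exp_add]
    by_cases h : i < m
    · have he : ((-(m : ℤ) : ℤ) : A) + ((a m i : ℤ) : A) = ((-(r : ℤ) : ℤ) : A) := by
        rw [ha, if_pos h]; push_cast; ring
      rw [he, if_pos h]
    · have he : ((-(m : ℤ) : ℤ) : A) + ((a m i : ℤ) : A) = 0 := by
        rw [ha, if_neg h]; push_cast; ring
      rw [he, if_neg h, rescale_zero]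
      simp [constantCoeff_exp]
  constructor
  · intro k N hk hN
    have h1 := congrArg (PowerSeries.coeff 1) hN
    rw [coeff_succ_X_mul, coeff_rescale, coeff_exp] at h1
    have hmul : (PowerSeries.coeff 1) ((1 - G) * N)
        = (PowerSeries.coeff 0) (1 - G) * (PowerSeries.coeff 1) N
          + (PowerSeries.coeff 1) (1 - G) * (PowerSeries.coeff 0) N := by
      rw [coeff_mul]
      rw [Finset.Nat.sum_antidiagonal_eq_sum_range_succ_mk]
      simp [Finset.sum_range_succ]
    have h0 : (PowerSeries.coeff 0) (1 - G) = 0 := by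
      rw [map_sub, hG, coeff_rescale, coeff_exp]
      simp
    have hc1 : (PowerSeries.coeff 1) (1 - G) = (r : A) := by
      rw [map_sub, hG, coeff_rescale, coeff_exp]
      simp
    rw [hmul, h0, hc1, zero_mul, zero_add] at h1
    simp only [pow_one, Nat.factorial_zero] at h1
    have hrA : (r : A) = algebraMap ℚ A (r : ℚ) := by push_cast; simp
    have hne : (r : ℚ) ≠ 0 := Nat.cast_ne_zero.mpr hr.ne'
    have : algebraMap ℚ A (1 / r) * ((r : A) * (PowerSeries.coeff 0) N)
        = algebraMap ℚ A (1 / r) * algebraMap ℚ A 1 := by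
      rw [← h1]; ring_nf
    rw [hrA, ← mul_assoc, ← map_mul] at this
    rw [div_mul_cancel₀ 1 hne] at this
    simpa [coeff_zero_eq_constantCoeff] using this
  · intro k hk
    have hk1 : rescale ((-((k : ℤ) + 1) : ℤ) : A) (exp A) * H (k + 1)
        = ∑ i ∈ Finset.range r, (if i < k + 1 then G else 1) * E i := by
      rcases lt_or_eq_of_le (Nat.succ_le_of_lt hk) with h | h
      · have := helper (k + 1) h
        simpa using this
      · have h' : k + 1 = r := h
        rw [h', hHr, hH 0 hr, Finset.mul_sum]
        refine Finset.sum_congr rfl fun i hi => ?_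
        have hlt : i < k + 1 := h' ▸ Finset.mem_range.mp hi
        have he : ((-((k : ℤ) + 1) : ℤ) : A) + ((a 0 i : ℤ) : A) = ((-(r : ℤ) : ℤ) : A) := by
          rw [ha]; push_cast [← h']; simp
        rw [← mul_assoc, exp_mul_exp_eq_exp_add, he, if_pos (Finset.mem_range.mp hi)]
    rw [helper k hk, hk1, ← Finset.sum_sub_distrib]
    have : ∀ i ∈ Finset.range r,
        (if i < k then G else 1) * E i - (if i < k + 1 then G else 1) * E i
          = (if i = k then (1 - G) * E k else 0) := by
      intro i _
      rcases lt_trichotomy i k with h | h | h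
      · simp [h, Nat.lt_succ_of_lt h, h.ne]
      · simp [h, sub_mul]
      · simp [h.ne', Nat.lt_irrefl, not_lt_of_gt h, Nat.succ_le_of_lt h,
          Nat.not_lt.mpr (Nat.succ_le_of_lt h)]
    rw [Finset.sum_congr rfl this, Finset.sum_ite_eq' (Finset.range r) k]
    simp [Finset.mem_range.mpr hk]
end

section
/- Conjugation of the diagonal fermionic operator ℰ(z) = (1/ς(rz)) ∑_{m∈ℤ+1/2} e^{mrz} E_{m,m} by the d-th power of the shift (translation) operator S on the fermionic Fock space satisfies S^{−d} ℰ(z) S^{d} = e^{drz} ℰ(z) + ((e^{drz} − 1)/ς(rz)²) · Id, for every d ∈ ℤ. -/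
open scoped Classical

lemma sum_congr_supp (c f : ℤ → ℝ) (M N : Finset ℤ)
    (hM : ∀ m, c m ≠ 0 → m ∈ M) (hN : ∀ m, c m ≠ 0 → m ∈ N) :
    ∑ m ∈ M, f m * c m = ∑ m ∈ N, f m * c m := by
  have h1 : ∑ m ∈ M, f m * c m = ∑ m ∈ M ∪ N, f m * c m := by
    apply Finset.sum_subset Finset.subset_union_left
    intro x _ hx
    have : c x = 0 := by by_contra h; exact hx (hM x h)
    simp [this]
  have h2 : ∑ m ∈ N, f m * c m = ∑ m ∈ M ∪ N, f m * c m := by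
    apply Finset.sum_subset Finset.subset_union_right
    intro x _ hx
    have : c x = 0 := by by_contra h; exact hx (hN x h)
    simp [this]
  rw [h1, h2]

noncomputable def Bset (l : ℕ → ℕ) (L : ℕ) (p : ℤ) : Finset ℤ :=
  Finset.Icc (min (p - L) 0) (max 0 (p + l 0))

lemma supp_c (l : ℕ → ℕ) (L : ℕ) (hl : Antitone l) (hL : ∀ j, L ≤ j → l j = 0)
    (c : ℤ → ℤ → ℝ)
    (hc : ∀ (p m : ℤ), c p m =
      (if ∃ j : ℕ, (l j : ℤ) - (j : ℤ) - 1 + p = m then (1 : ℝ) else 0)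
        - (if m < 0 then 1 else 0))
    (p m : ℤ) (h : c p m ≠ 0) :
    m ∈ Bset l L p := by
  rw [hc] at h
  simp only [Bset, Finset.mem_Icc]
  by_cases hA : ∃ j : ℕ, (l j : ℤ) - j - 1 + p = m
  · by_cases hB : m < 0
    · simp [hA, hB] at h
    · obtain ⟨j, hj⟩ := hA
      have hle : (l j : ℤ) ≤ l 0 := by exact_mod_cast hl (Nat.zero_le j)
      push_neg at hB
      refine ⟨le_trans (min_le_right _ _) hB, le_trans (by omega) (le_max_right _ _)⟩
  · by_cases hB : m < 0
    · have hge : p - L ≤ m := by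
        by_contra hcon
        push_neg at hcon
        apply hA
        refine ⟨(p - 1 - m).toNat, ?_⟩
        have h3 : l (p - 1 - m).toNat = 0 := hL _ (by omega)
        rw [h3]
        omega
      exact ⟨le_trans (min_le_left _ _) hge, le_trans (by omega) (le_max_left _ _)⟩
    · simp [hA, hB] at h

lemma c_step (l : ℕ → ℕ) (c : ℤ → ℤ → ℝ)
    (hc : ∀ (p m : ℤ), c p m =
      (if ∃ j : ℕ, (l j : ℤ) - (j : ℤ) - 1 + p = m then (1 : ℝ) else 0)
        - (if m < 0 then 1 else 0))
    (p m : ℤ) :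
    c (p + 1) m = c p (m - 1) + (if m = 0 then 1 else 0) := by
  rw [hc, hc]
  have hiff : (∃ j : ℕ, (l j : ℤ) - j - 1 + (p + 1) = m)
      ↔ (∃ j : ℕ, (l j : ℤ) - j - 1 + p = m - 1) := by
    constructor <;> rintro ⟨j, hj⟩ <;> exact ⟨j, by omega⟩
  rw [if_congr hiff rfl rfl]
  by_cases h0 : m = 0
  · subst h0; norm_num
  · have hmm : (m < 0) ↔ (m - 1 < 0) := by omega
    rw [if_congr hmm rfl rfl, if_neg h0]
    ring

lemma shift_sum (r : ℕ) (z : ℝ) (l : ℕ → ℕ) (L : ℕ)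
    (hl : Antitone l) (hL : ∀ j, L ≤ j → l j = 0)
    (c : ℤ → ℤ → ℝ)
    (hc : ∀ (p m : ℤ), c p m =
      (if ∃ j : ℕ, (l j : ℤ) - (j : ℤ) - 1 + p = m then (1 : ℝ) else 0)
        - (if m < 0 then 1 else 0))
    (p : ℤ) (M : Finset ℤ) (hM : ∀ m, c (p + 1) m ≠ 0 → m ∈ M) :
    ∑ m ∈ M, Real.exp (((m : ℝ) + 1 / 2) * (r * z)) * c (p + 1) m
      = Real.exp ((r : ℝ) * z) *
          ∑ m ∈ Bset l L p, Real.exp (((m : ℝ) + 1 / 2) * (r * z)) * c p m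
        + Real.exp ((r : ℝ) * z / 2) := by
  set f : ℤ → ℝ := fun m => Real.exp (((m : ℝ) + 1 / 2) * (r * z)) with hf
  set M'' : Finset ℤ := ((Bset l L p).image (· + 1)) ∪ {0} with hM''
  have hsupp' : ∀ m, c (p + 1) m ≠ 0 → m ∈ M'' := by
    intro m h
    by_cases h0 : m = 0
    · simp [hM'', h0]
    · have hc1 : c p (m - 1) ≠ 0 := by
        intro hz0
        rw [c_step l c hc, hz0, if_neg h0] at h
        simp at h
      have := supp_c l L hl hL c hc p (m - 1) hc1
      simp only [hM'', Finset.mem_union, Finset.mem_image]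
      exact Or.inl ⟨m - 1, this, by ring⟩
  rw [sum_congr_supp (c (p + 1)) f M M'' hM hsupp']
  have hpt : ∀ m ∈ M'', f m * c (p + 1) m
      = Real.exp ((r : ℝ) * z) * (f (m - 1) * c p (m - 1))
        + (if m = 0 then Real.exp ((r : ℝ) * z / 2) else 0) := by
    intro m _
    rw [c_step l c hc, mul_add]
    congr 1
    · have hexp : f m = Real.exp ((r : ℝ) * z) * f (m - 1) := by
        rw [hf]; simp only; rw [← Real.exp_add]; congr 1; push_cast; ring
      rw [hexp, mul_assoc]
    · by_cases h0 : m = 0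
      · subst h0; rw [if_pos rfl, if_pos rfl, hf]; simp only; norm_num; ring
      · simp [h0]
  rw [Finset.sum_congr rfl hpt, Finset.sum_add_distrib, Finset.sum_ite_eq' M'' 0]
  have h0mem : (0 : ℤ) ∈ M'' := by simp [hM'']
  rw [if_pos h0mem, ← Finset.mul_sum]
  congr 1
  congr 1
  have hinj : ∀ x ∈ M'', ∀ y ∈ M'', x - 1 = y - 1 → x = y := fun x _ y _ h => by omega
  have himg := Finset.sum_image (s := M'') (g := fun x => x - 1)
    (f := fun x => f x * c p x) hinj
  rw [← himg]
  exact sum_congr_supp (c p) f _ _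
    (fun m h => by
      simp only [Finset.mem_image]
      exact ⟨m + 1, by
        simp only [hM'', Finset.mem_union, Finset.mem_image]
        exact Or.inl ⟨m, supp_c l L hl hL c hc p m h, rfl⟩, by ring⟩)
    (fun m h => supp_c l L hl hL c hc p m h)

/-- `S^{−d} ℰ(z) S^{d} = e^{drz} ℰ(z) + ((e^{drz} − 1)/ς(rz)²)·Id` for the
diagonal fermionic operator `ℰ(z) = (1/ς(rz)) ∑_{m∈ℤ+1/2} e^{mrz} E_{m,m}` and the
charge-shift operator `S`.  Both sides are diagonal on the basis vectors, indexed by a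
partition `λ` (written `l 0 ≥ l 1 ≥ ⋯`, vanishing from `L` on) and a charge `q ∈ ℤ`;
the normal-ordered eigenvalue of `E_{m'+1/2,m'+1/2}` in charge `q` is
`c q m' = [m' ∈ {λ_j − j + q : j ≥ 1}] − [m' < 0]` (finitely supported).  The operator
identity says precisely that for every `λ`, `q`, `d` the eigenvalue of `ℰ(z)` in charge
`q + d` equals `e^{drz}` times the one in charge `q` plus `(e^{drz} − 1)/ς(rz)²`
(stated for real `z > 0`, where all regularized sums converge). -/
theorem stmt_14 (r : ℕ) (hr : 0 < r) (l : ℕ → ℕ) (L : ℕ)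
    (hl : Antitone l) (hL : ∀ j, L ≤ j → l j = 0)
    (z : ℝ) (hz : 0 < z) (q d : ℤ)
    (c : ℤ → ℤ → ℝ)
    (hc : ∀ (p m : ℤ), c p m =
      (if ∃ j : ℕ, (l j : ℤ) - (j : ℤ) - 1 + p = m then (1 : ℝ) else 0)
        - (if m < 0 then 1 else 0))
    (M : Finset ℤ) (hM : ∀ m, c q m ≠ 0 ∨ c (q + d) m ≠ 0 → m ∈ M) :
    (Real.exp (r * z / 2) - Real.exp (-(r * z) / 2))⁻¹ *
        ∑ m ∈ M, Real.exp (((m : ℝ) + 1 / 2) * (r * z)) * c (q + d) m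
      = Real.exp ((d : ℝ) * (r * z)) *
          ((Real.exp (r * z / 2) - Real.exp (-(r * z) / 2))⁻¹ *
            ∑ m ∈ M, Real.exp (((m : ℝ) + 1 / 2) * (r * z)) * c q m)
        + (Real.exp ((d : ℝ) * (r * z)) - 1) *
            ((Real.exp (r * z / 2) - Real.exp (-(r * z) / 2))⁻¹) ^ 2 := by
  set f : ℤ → ℝ := fun m => Real.exp (((m : ℝ) + 1 / 2) * (r * z)) with hf
  set ς : ℝ := Real.exp (r * z / 2) - Real.exp (-(r * z) / 2) with hςdef
  set Sg : ℤ → ℝ := fun p => ∑ m ∈ Bset l L p, f m * c p m with hSg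
  have hrz : (0 : ℝ) < (r : ℝ) * z := by positivity
  have hςpos : 0 < ς := by
    rw [hςdef]
    have : -(((r : ℝ) * z)) / 2 < (r : ℝ) * z / 2 := by linarith
    simpa using Real.exp_lt_exp.mpr this
  have hςne : ς ≠ 0 := ne_of_gt hςpos
  have hE1 : Real.exp ((r : ℝ) * z / 2) * ς = Real.exp ((r : ℝ) * z) - 1 := by
    rw [hςdef, mul_sub, ← Real.exp_add, ← Real.exp_add,
      show (r : ℝ) * z / 2 + (r : ℝ) * z / 2 = (r : ℝ) * z by ring,
      show (r : ℝ) * z / 2 + -((r : ℝ) * z) / 2 = 0 by ring, Real.exp_zero]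
  have hEne : Real.exp ((r : ℝ) * z) ≠ 0 := Real.exp_ne_zero _
  have hrec : ∀ p : ℤ, Sg (p + 1) = Real.exp ((r : ℝ) * z) * Sg p
      + Real.exp ((r : ℝ) * z / 2) := by
    intro p
    exact shift_sum r z l L hl hL c hc p (Bset l L (p + 1))
      (fun m h => supp_c l L hl hL c hc (p + 1) m h)
  have key : ∀ e : ℤ, ς⁻¹ * Sg (q + e)
      = Real.exp ((e : ℝ) * (r * z)) * (ς⁻¹ * Sg q)
        + (Real.exp ((e : ℝ) * (r * z)) - 1) * (ς⁻¹) ^ 2 := by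
    intro e
    induction e using Int.induction_on with
    | zero => simp
    | succ n ih =>
      have h1 : q + ((n : ℤ) + 1) = (q + n) + 1 := by ring
      rw [h1, hrec (q + n)]
      have h2 : Real.exp ((((n : ℤ) + 1 : ℤ) : ℝ) * (r * z))
          = Real.exp ((r : ℝ) * z) * Real.exp (((n : ℤ) : ℝ) * (r * z)) := by
        rw [← Real.exp_add]; push_cast; ring_nf
      rw [h2]
      have hs : ς * ς⁻¹ = 1 := mul_inv_cancel₀ hςne
      linear_combination Real.exp ((r : ℝ) * z) * ih + (ς⁻¹) ^ 2 * hE1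
        - Real.exp ((r : ℝ) * z / 2) * ς⁻¹ * hs
    | pred n ih =>
      have h1 : q + (-(n : ℤ)) = (q + (-(n : ℤ) - 1)) + 1 := by ring
      rw [h1, hrec (q + (-(n : ℤ) - 1))] at ih
      have h2 : Real.exp ((r : ℝ) * z) * Real.exp (((-(n : ℤ) - 1 : ℤ) : ℝ) * (r * z))
          = Real.exp (((-(n : ℤ) : ℤ) : ℝ) * (r * z)) := by
        rw [← Real.exp_add]; congr 1; push_cast; ring
      have hs : ς * ς⁻¹ = 1 := mul_inv_cancel₀ hςne
      have goal' : Real.exp ((r : ℝ) * z) * (ς⁻¹ * Sg (q + (-(n : ℤ) - 1)))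
          = Real.exp ((r : ℝ) * z) * (Real.exp (((-(n : ℤ) - 1 : ℤ) : ℝ) * (r * z)) * (ς⁻¹ * Sg q)
            + (Real.exp (((-(n : ℤ) - 1 : ℤ) : ℝ) * (r * z)) - 1) * (ς⁻¹) ^ 2) := by
        linear_combination ih - (ς⁻¹ * Sg q + (ς⁻¹) ^ 2) * h2 - (ς⁻¹) ^ 2 * hE1
          + Real.exp ((r : ℝ) * z / 2) * ς⁻¹ * hs
      exact mul_left_cancel₀ hEne goal'
  have e1 : ∑ m ∈ M, f m * c (q + d) m = Sg (q + d) :=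
    sum_congr_supp (c (q + d)) f M (Bset l L (q + d))
      (fun m h => hM m (Or.inr h)) (fun m h => supp_c l L hl hL c hc (q + d) m h)
  have e2 : ∑ m ∈ M, f m * c q m = Sg q :=
    sum_congr_supp (c q) f M (Bset l L q)
      (fun m h => hM m (Or.inl h)) (fun m h => supp_c l L hl hL c hc q m h)
  rw [e1, e2]
  exact key d
end
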